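/- arXiv:math/0412243 — 9 statements merged into one kernel-verified Lean document; each statement's English description precedes it below -/
import Mathlib

section
/- Let E be a row-finite directed graph and let →₁ and → be the relations on the free abelian monoid F_E on E⁰ defined from the graph relations. If α = α₁ + α₂ in F_E and α → β, then β can be written as β = β₁ + β₂ with α₁ → β₁ and α₂ → β₂. -/
/-- A row-finite directed graph: vertex set `V`, edge set `Edge`,
source and range maps, with every vertex emitting finitely many edges. -/
structure RFGraph where
  V : Type
  Edge : Type
  s : Edge → V
  r : Edge → V
  rowFinite : ∀ v : V, {e : Edge | s e = v}.Finite

namespace RFGraph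

/-- The free abelian monoid on the vertex set. -/
abbrev F (G : RFGraph) : Type := G.V →₀ ℕ

/-- `v` emits at least one edge. -/
def emits (G : RFGraph) (v : G.V) : Prop := ∃ e : G.Edge, G.s e = v

/-- `𝐫(v) = Σ_{e ∈ s⁻¹(v)} r(e)` in the free abelian monoid. -/
noncomputable def rr (G : RFGraph) (v : G.V) : G.F :=
  ∑ e ∈ (G.rowFinite v).toFinset, Finsupp.single (G.r e) 1

/-- The one-step relation `→₁`: `α →₁ β` iff `α = x + α'` for a vertex `x`
emitting at least one edge, and `β = 𝐫(x) + α'`. -/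
def step (G : RFGraph) (α β : G.F) : Prop :=
  ∃ (x : G.V) (α' : G.F), G.emits x ∧ α = Finsupp.single x 1 + α' ∧ β = G.rr x + α'

/-- The reflexive-transitive closure `→` of `→₁`. -/
def steps (G : RFGraph) : G.F → G.F → Prop := Relation.ReflTransGen G.step

/-- The additive congruence `∼` on `F_E` generated by `→₁`. -/
noncomputable def graphCon (G : RFGraph) : AddCon G.F := addConGen G.step

/-- The graph monoid `M_E = F_E/∼`. -/
abbrev M (G : RFGraph) : Type := G.graphCon.Quotient

/-- The class `a_v` of a vertex `v` in the graph monoid. -/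
noncomputable def av (G : RFGraph) (v : G.V) : G.M := G.graphCon.mk' (Finsupp.single v 1)

end RFGraph

private lemma step_split (G : RFGraph) (α₁ α₂ β : G.F) (h : G.step (α₁ + α₂) β) :
    (∃ β₁, β = β₁ + α₂ ∧ G.step α₁ β₁) ∨ (∃ β₂, β = α₁ + β₂ ∧ G.step α₂ β₂) := by
  obtain ⟨x, α', hx, heq, hβ⟩ := h
  have hx1 : 1 ≤ α₁ x + α₂ x := by
    have := congrArg (fun f : G.F => f x) heq
    simp [Finsupp.add_apply] at this
    omega
  rcases (by omega : 1 ≤ α₁ x ∨ 1 ≤ α₂ x) with h1 | h2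
  · left
    have hle : Finsupp.single x 1 ≤ α₁ := Finsupp.single_le_iff.mpr h1
    set γ := α₁ - Finsupp.single x 1 with hγ
    have hα₁ : α₁ = Finsupp.single x 1 + γ := (add_tsub_cancel_of_le hle).symm
    have hα' : α' = γ + α₂ := by
      have : Finsupp.single x 1 + α' = Finsupp.single x 1 + (γ + α₂) := by
        rw [← heq, hα₁]; abel
      exact add_left_cancel this
    exact ⟨G.rr x + γ, by rw [hβ, hα']; abel, ⟨x, γ, hx, hα₁, rfl⟩⟩
  · right
    have hle : Finsupp.single x 1 ≤ α₂ := Finsupp.single_le_iff.mpr h2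
    set γ := α₂ - Finsupp.single x 1 with hγ
    have hα₂ : α₂ = Finsupp.single x 1 + γ := (add_tsub_cancel_of_le hle).symm
    have hα' : α' = α₁ + γ := by
      have : Finsupp.single x 1 + α' = Finsupp.single x 1 + (α₁ + γ) := by
        rw [← heq, hα₂]; abel
      exact add_left_cancel this
    exact ⟨G.rr x + γ, by rw [hβ, hα']; abel, ⟨x, γ, hx, hα₂, rfl⟩⟩

/-- If `α = α₁ + α₂` in `F_E` and `α → β`, then `β` can be written as
`β = β₁ + β₂` with `α₁ → β₁` and `α₂ → β₂`. -/
theorem stmt0 (G : RFGraph) (α α₁ α₂ β : G.F)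
    (hα : α = α₁ + α₂) (h : G.steps α β) :
    ∃ β₁ β₂ : G.F, β = β₁ + β₂ ∧ G.steps α₁ β₁ ∧ G.steps α₂ β₂ := by
  subst hα
  induction h with
  | refl => exact ⟨α₁, α₂, rfl, Relation.ReflTransGen.refl, Relation.ReflTransGen.refl⟩
  | tail hab hbc ih =>
    obtain ⟨β₁, β₂, rfl, h1, h2⟩ := ih
    rcases step_split G β₁ β₂ _ hbc with ⟨c₁, rfl, hs⟩ | ⟨c₂, rfl, hs⟩
    · exact ⟨c₁, β₂, rfl, h1.tail hs, h2⟩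
    · exact ⟨β₁, c₂, rfl, h1, h2.tail hs⟩
end

section
/- Let E be a row-finite directed graph, let →₁ and → be the relations on the free abelian monoid F_E on E⁰ defined from the graph relations, and let ∼ be the congruence on F_E generated by →₁. For nonzero α, β ∈ F_E, one has α ∼ β if and only if there exists γ ∈ F_E with α → γ and β → γ. -/
namespace RFGraph

lemma step_add (G : RFGraph) {a b : G.F} (h : G.step a b) (δ : G.F) :
    G.step (a + δ) (b + δ) := by
  obtain ⟨x, α', hx, rfl, rfl⟩ := h
  exact ⟨x, α' + δ, hx, by rw [add_assoc], by rw [add_assoc]⟩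

lemma steps_add (G : RFGraph) {a b : G.F} (h : G.steps a b) (δ : G.F) :
    G.steps (a + δ) (b + δ) := by
  induction h with
  | refl => exact Relation.ReflTransGen.refl
  | tail _ h2 ih => exact ih.tail (G.step_add h2 δ)

lemma diamond (G : RFGraph) {a b c : G.F} (hab : G.step a b) (hac : G.step a c) :
    ∃ d, Relation.ReflGen G.step b d ∧ Relation.ReflTransGen G.step c d := by
  obtain ⟨x, α', hx, rfl, rfl⟩ := hab
  obtain ⟨y, α'', hy, hxy, rfl⟩ := hac
  by_cases hv : x = y
  · subst hv
    obtain rfl : α' = α'' := add_left_cancel hxy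
    exact ⟨_, Relation.ReflGen.refl, Relation.ReflTransGen.refl⟩
  · have h1 : α' y = 1 + α'' y := by
      have := congrArg (fun f => f y) hxy
      simpa [Finsupp.single_apply, hv] using this
    have hle : Finsupp.single y 1 ≤ α' := by
      rw [Finsupp.single_le_iff]; omega
    obtain ⟨τ, rfl⟩ := exists_add_of_le hle
    have hτ : α'' = Finsupp.single x 1 + τ := by
      apply add_left_cancel (a := Finsupp.single y 1)
      rw [← hxy]; abel
    refine ⟨G.rr x + G.rr y + τ, ?_, ?_⟩
    · exact Relation.ReflGen.single ⟨y, G.rr x + τ, hy, by abel, by abel⟩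
    · exact Relation.ReflTransGen.single ⟨x, G.rr y + τ, hx, by rw [hτ]; abel, by abel⟩

lemma joinEquiv (G : RFGraph) : Equivalence (Relation.Join G.steps) :=
  Relation.equivalence_join_reflTransGen (fun _ _ _ hab hac => G.diamond hab hac)

/-- The joinability relation as an additive congruence. -/
noncomputable def joinCon (G : RFGraph) : AddCon G.F where
  r := Relation.Join G.steps
  iseqv := G.joinEquiv
  add' := by
    rintro a b c d ⟨e, hae, hbe⟩ ⟨f, hcf, hdf⟩
    have key : ∀ {p q : G.F}, G.steps p e → G.steps q f → G.steps (p + q) (e + f) := by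
      intro p q h1 h2
      refine (G.steps_add h1 q).trans ?_
      rw [add_comm e q, add_comm e f]
      exact G.steps_add h2 e
    exact ⟨e + f, key hae hcf, key hbe hdf⟩

lemma steps_con (G : RFGraph) {a b : G.F} (h : G.steps a b) : G.graphCon a b := by
  induction h with
  | refl => exact G.graphCon.refl _
  | tail _ h2 ih => exact ih.trans (AddConGen.Rel.of _ _ h2)

end RFGraph


/-- For nonzero `α, β ∈ F_E`, `α ∼ β` iff there is `γ` with
`α → γ` and `β → γ`. -/
theorem stmt1 (G : RFGraph) (α β : G.F) (hα : α ≠ 0) (hβ : β ≠ 0) :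
    G.graphCon α β ↔ ∃ γ : G.F, G.steps α γ ∧ G.steps β γ := by
  constructor
  · intro h
    have hj : G.joinCon α β := AddCon.addConGen_le.mpr
      (fun x y hxy => show Relation.Join G.steps x y from
        ⟨y, Relation.ReflTransGen.single hxy, Relation.ReflTransGen.refl⟩) h
    exact hj
  · rintro ⟨γ, h1, h2⟩
    exact (G.steps_con h1).trans (G.steps_con h2).symm
end

section
/- Let E be a row-finite directed graph, let G be the Grothendieck group (group completion) of the graph monoid M_E, and let φ : M_E → G be the canonical map. Then G is unperforated with respect to the positive cone φ(M_E): for every g ∈ G and every positive integer n, if n·g ∈ φ(M_E) then g ∈ φ(M_E). -/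
/- ----------- auxiliary constructions ----------- -/

namespace RFGraph

variable (G : RFGraph)

/-- Inclusion of the free abelian monoid into the free abelian group. -/
noncomputable def iF : G.F →+ (G.V →₀ ℤ) :=
  Finsupp.mapRange.addMonoidHom (Nat.castAddMonoidHom ℤ)

lemma iF_apply (α : G.F) (v : G.V) : G.iF α v = (α v : ℤ) := by
  simp [iF, Finsupp.mapRange.addMonoidHom, Finsupp.mapRange_apply]
  rfl

lemma iF_single (v : G.V) (k : ℕ) : G.iF (Finsupp.single v k) = Finsupp.single v (k : ℤ) := by
  simp [iF]

open Classical in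
/-- The vector `x - 𝐫(x)` for an emitting vertex, `0` otherwise. -/
noncomputable def cvec (v : G.V) : G.V →₀ ℤ :=
  if G.emits v then Finsupp.single v 1 - G.iF (G.rr v) else 0

/-- The map `z ↦ ∑ z_v (v - 𝐫(v))`. -/
noncomputable def Tm : (G.V →₀ ℤ) →+ (G.V →₀ ℤ) :=
  Finsupp.liftAddHom fun v => zmultiplesHom _ (G.cvec v)

lemma Tm_single_one (v : G.V) : G.Tm (Finsupp.single v 1) = G.cvec v := by
  simp [Tm, Finsupp.liftAddHom_apply_single]

/-- The relation subgroup. -/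
noncomputable def L : AddSubgroup (G.V →₀ ℤ) := G.Tm.range

/-- The concrete Grothendieck group. -/
abbrev G0 := (G.V →₀ ℤ) ⧸ G.L

noncomputable def mkQ : (G.V →₀ ℤ) →+ G.G0 := QuotientAddGroup.mk' G.L

lemma step_diff (a b : G.F) (h : G.step a b) : G.iF a - G.iF b ∈ G.L := by
  obtain ⟨x, α', hx, rfl, rfl⟩ := h
  have h1 : G.iF (Finsupp.single x 1 + α') - G.iF (G.rr x + α') = G.cvec x := by
    rw [map_add, map_add, cvec, if_pos hx, G.iF_single]
    push_cast
    abel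
  rw [h1]
  exact ⟨Finsupp.single x 1, G.Tm_single_one x⟩

/-- The canonical map `M_E → G₀`. -/
noncomputable def phi0 : G.M →+ G.G0 :=
  G.graphCon.lift (G.mkQ.comp G.iF)
    (AddCon.addConGen_le.mpr fun a b h => by
      rw [AddCon.ker_rel]
      have hd := G.step_diff a b h
      exact (QuotientAddGroup.eq_iff_sub_mem).mpr hd)

lemma phi0_mk (α : G.F) : G.phi0 (G.graphCon.mk' α) = G.mkQ (G.iF α) :=
  AddCon.lift_mk' _ _

end RFGraph

open RFGraph Finsupp

/-- Ceiling division bounds. -/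
lemma ceil_div_bounds (n : ℤ) (hn : 0 < n) (k : ℤ) :
    k ≤ n * ((k + n - 1) / n) ∧ n * ((k + n - 1) / n) ≤ k + n - 1 := by
  have h0 := Int.mul_ediv_add_emod (k + n - 1) n
  have h1 := Int.emod_nonneg (k + n - 1) hn.ne'
  have h2 := Int.emod_lt_of_pos (k + n - 1) hn
  constructor <;> linarith

/-- Key pointwise estimate: if `y ≤ 0` coordinatewise, then `(Tm y) v ≥ y v`. -/
lemma Tm_apply_ge (G : RFGraph) (y : G.V →₀ ℤ) (hy : ∀ x, y x ≤ 0) (v : G.V) :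
    y v ≤ G.Tm y v := by
  classical
  have hT : G.Tm y v = ∑ x ∈ y.support, y x * (G.cvec x v) := by
    rw [Tm, Finsupp.liftAddHom_apply, Finsupp.sum_apply]
    simp [Finsupp.sum, zmultiplesHom_apply, Finsupp.smul_apply, smul_eq_mul]
  have hcle : ∀ x : G.V, x ≠ v → G.cvec x v ≤ 0 := by
    intro x hxv
    rw [cvec]
    split
    · rw [Finsupp.sub_apply, Finsupp.single_apply, if_neg hxv, G.iF_apply]
      simp
    · simp
  have hcvv : G.cvec v v ≤ 1 := by
    rw [cvec]
    split
    · rw [Finsupp.sub_apply, Finsupp.single_apply, if_pos rfl, G.iF_apply]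
      have : (0:ℤ) ≤ ((G.rr v) v : ℤ) := Int.ofNat_nonneg _
      linarith
    · simp
  rw [hT]
  have hbound : ∀ x ∈ y.support, (if x = v then y v else 0) ≤ y x * G.cvec x v := by
    intro x _
    by_cases hxv : x = v
    · subst hxv
      rw [if_pos rfl]
      calc y x = y x * 1 := (mul_one _).symm
        _ ≤ y x * G.cvec x x := mul_le_mul_of_nonpos_left hcvv (hy x)
    · rw [if_neg hxv]
      exact mul_nonneg_of_nonpos_of_nonpos (hy x) (hcle x hxv)
  calc y v ≤ if v ∈ y.support then y v else 0 := by
        split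
        · exact le_refl _
        · next h => rw [Finsupp.notMem_support_iff.mp h]
    _ = ∑ x ∈ y.support, (if x = v then y v else 0) :=
        (Finset.sum_ite_eq' y.support v (fun _ => y v)).symm
    _ ≤ ∑ x ∈ y.support, y x * G.cvec x v := Finset.sum_le_sum hbound

/-- Unperforation in the concrete model. -/
lemma G0_unperforated (G : RFGraph) (n : ℕ) (hn : 0 < n) (u : G.G0)
    (h : n • u ∈ Set.range G.phi0) : u ∈ Set.range G.phi0 := by
  classical
  obtain ⟨m, hm⟩ := h
  obtain ⟨α, rfl⟩ := AddCon.mk'_surjective m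
  rw [G.phi0_mk] at hm
  obtain ⟨ξ, rfl⟩ := QuotientAddGroup.mk'_surjective G.L u
  set nz : ℤ := (n : ℤ) with hnzdef
  have hnz0 : 0 < nz := by rw [hnzdef]; exact_mod_cast hn
  -- n • ξ - iF α ∈ L
  have hmem : n • ξ - G.iF α ∈ G.L := by
    have h1 : G.mkQ (n • ξ - G.iF α) = 0 := by
      rw [map_sub, map_nsmul, hm,
        show G.mkQ ξ = (QuotientAddGroup.mk' G.L) ξ from rfl]
      abel
    exact (QuotientAddGroup.eq_zero_iff _).mp h1
  obtain ⟨z, hz⟩ := hmem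
  -- ceiling division
  have hf0 : ((0:ℤ) + nz - 1) / nz = 0 :=
    Int.ediv_eq_zero_of_lt (by omega) (by omega)
  set w : G.V →₀ ℤ := z.mapRange (fun k => (k + nz - 1) / nz) hf0 with hwdef
  set y : G.V →₀ ℤ := z - n • w with hydef
  have hyval : ∀ x, y x = z x - nz * ((z x + nz - 1) / nz) := by
    intro x
    have hsm : (n • w) x = nz * w x := by
      rw [Finsupp.smul_apply, nsmul_eq_mul, hnzdef]
    rw [hydef, Finsupp.sub_apply, hsm, hwdef, Finsupp.mapRange_apply]
  have hy_le : ∀ x, y x ≤ 0 := by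
    intro x
    have := (ceil_div_bounds nz hnz0 (z x)).1
    rw [hyval x]; linarith
  have hy_gt : ∀ x, -nz < y x := by
    intro x
    have := (ceil_div_bounds nz hnz0 (z x)).2
    rw [hyval x]; linarith
  set θ : G.V →₀ ℤ := ξ - G.Tm w with hθdef
  have hkey : ∀ v, nz * θ v = G.iF α v + G.Tm y v := by
    intro v
    have hsum : (n : ℕ) • θ = G.iF α + G.Tm y := by
      rw [hθdef, hydef, map_sub, map_nsmul, hz, smul_sub]
      abel
    have h2 := congrArg (fun f : G.V →₀ ℤ => f v) hsum
    simp only [Finsupp.add_apply, Finsupp.smul_apply] at h2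
    rw [← h2, nsmul_eq_mul, hnzdef]
  have hθnn : ∀ v, 0 ≤ θ v := by
    intro v
    by_contra hneg
    push_neg at hneg
    have h1 : θ v ≤ -1 := by omega
    have h2 : nz * θ v ≤ nz * (-1) := by
      exact mul_le_mul_of_nonneg_left h1 (le_of_lt hnz0)
    have h3 : (0:ℤ) ≤ G.iF α v := by rw [G.iF_apply]; exact Int.ofNat_nonneg _
    have h4 := Tm_apply_ge G y hy_le v
    have h5 := hy_gt v
    have := hkey v
    nlinarith
  set α' : G.F := θ.mapRange Int.toNat Int.toNat_zero with hα'def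
  have hiFα' : G.iF α' = θ := by
    ext v
    rw [G.iF_apply, hα'def, Finsupp.mapRange_apply, Int.toNat_of_nonneg (hθnn v)]
  refine ⟨G.graphCon.mk' α', ?_⟩
  rw [G.phi0_mk, hiFα']
  have : θ - ξ ∈ G.L := by
    rw [hθdef]
    have : ξ - G.Tm w - ξ = -(G.Tm w) := by abel
    rw [this]
    exact neg_mem ⟨w, rfl⟩
  exact (QuotientAddGroup.eq_iff_sub_mem).mpr this

/-- The Grothendieck group of `M_E` (characterized by its universal
property) is unperforated with respect to the positive cone `φ(M_E)`. -/
theorem stmt6 (G : RFGraph) (Γ : Type) [AddCommGroup Γ] (φ : G.M →+ Γ)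
    (huniv : ∀ (A : Type) [AddCommGroup A] (f : G.M →+ A),
      ∃! g : Γ →+ A, g.comp φ = f)
    (g : Γ) (n : ℕ) (hn : 0 < n) (hng : n • g ∈ Set.range φ) :
    g ∈ Set.range φ := by
  classical
  -- the homomorphism H : (V →₀ ℤ) →+ Γ sending v to φ (a_v)
  set H : (G.V →₀ ℤ) →+ Γ := Finsupp.liftAddHom (fun v => zmultiplesHom Γ (φ (G.av v)))
    with hHdef
  have hHiF : H.comp G.iF = φ.comp G.graphCon.mk' := by
    apply Finsupp.addHom_ext'
    intro v
    apply AddMonoidHom.ext_nat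
    simp only [AddMonoidHom.comp_apply, Finsupp.singleAddHom_apply]
    rw [G.iF_single, hHdef, Finsupp.liftAddHom_apply_single, zmultiplesHom_apply,
      Nat.cast_one, one_zsmul]
    rfl
  have hHL : ∀ x ∈ G.L, H x = 0 := by
    intro x hx
    obtain ⟨z, rfl⟩ := hx
    have hcv : ∀ v, H (G.cvec v) = 0 := by
      intro v
      rw [cvec]
      split
      · next hv =>
        rw [map_sub]
        have h1 : H (Finsupp.single v 1) = φ (G.av v) := by
          rw [hHdef, Finsupp.liftAddHom_apply_single, zmultiplesHom_apply, one_zsmul]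
        have h2 : H (G.iF (G.rr v)) = φ (G.graphCon.mk' (G.rr v)) := by
          have := congrArg (fun f : G.F →+ Γ => f (G.rr v)) hHiF
          simpa using this
        have hrel : G.graphCon (Finsupp.single v 1) (G.rr v) :=
          AddConGen.Rel.of _ _ ⟨v, 0, hv, (add_zero _).symm, (add_zero _).symm⟩
        have h3 : G.graphCon.mk' (Finsupp.single v 1) = G.graphCon.mk' (G.rr v) :=
          (AddCon.eq _).mpr hrel
        rw [h1, h2, av, h3]
        abel
      · exact map_zero H
    have hcomp : H.comp G.Tm = 0 := by
      apply Finsupp.addHom_ext'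
      intro v
      apply AddMonoidHom.ext_int
      simp only [AddMonoidHom.comp_apply, Finsupp.singleAddHom_apply,
        AddMonoidHom.zero_apply]
      rw [G.Tm_single_one, hcv]
    have := congrArg (fun f : (G.V →₀ ℤ) →+ Γ => f z) hcomp
    simpa using this
  set h : G.G0 →+ Γ := QuotientAddGroup.lift G.L H hHL with hhdef
  have hhphi0 : h.comp G.phi0 = φ := by
    apply AddMonoidHom.ext
    intro m
    obtain ⟨α, rfl⟩ := AddCon.mk'_surjective m
    rw [AddMonoidHom.comp_apply, G.phi0_mk]
    have h1 : h (G.mkQ (G.iF α)) = H (G.iF α) := rfl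
    have h2 := congrArg (fun f : G.F →+ Γ => f α) hHiF
    simp only [AddMonoidHom.comp_apply] at h2
    rw [h1, h2]
  -- the comparison map ψ : Γ →+ G0
  obtain ⟨ψ, hψ, -⟩ := huniv G.G0 G.phi0
  have hid : h.comp ψ = AddMonoidHom.id Γ := by
    obtain ⟨e, -, hu⟩ := huniv Γ φ
    have h1 : h.comp ψ = e := hu _ (by
      show (h.comp ψ).comp φ = φ
      rw [AddMonoidHom.comp_assoc, hψ, hhphi0])
    have h2 : AddMonoidHom.id Γ = e := hu _ (by
      show (AddMonoidHom.id Γ).comp φ = φ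
      ext m; simp)
    rw [h1, ← h2]
  -- transport the hypothesis
  obtain ⟨m0, hm0⟩ := hng
  have hψφ : ∀ m : G.M, ψ (φ m) = G.phi0 m := fun m =>
    congrArg (fun f : G.M →+ G.G0 => f m) hψ
  have hmem : n • (ψ g) ∈ Set.range G.phi0 := by
    refine ⟨m0, ?_⟩
    rw [← hψφ m0, hm0, map_nsmul]
  obtain ⟨m1, hm1⟩ := G0_unperforated G n hn (ψ g) hmem
  refine ⟨m1, ?_⟩
  have : h (ψ (φ m1)) = h (ψ g) := by rw [hψφ m1, hm1]
  have hg : ∀ x : Γ, h (ψ x) = x := fun x =>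
    congrArg (fun f : Γ →+ Γ => f x) hid
  rw [hg, hg] at this
  exact this
end

section
/- Let E be a row-finite directed graph and let I be an order-ideal of the graph monoid M_E. Then the set ψ(I) = { v ∈ E⁰ : a_v ∈ I } is a hereditary and saturated subset of E⁰. -/
namespace RFGraph

/-- `v ≥ w`: there is a (possibly empty) directed path from `v` to `w`. -/
def reaches (G : RFGraph) : G.V → G.V → Prop :=
  Relation.ReflTransGen (fun a b => ∃ e : G.Edge, G.s e = a ∧ G.r e = b)

/-- A subset of the vertices is hereditary. -/
def Hereditary (G : RFGraph) (H : Set G.V) : Prop :=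
  ∀ v w : G.V, v ∈ H → G.reaches v w → w ∈ H

/-- A subset of the vertices is saturated. -/
def Saturated (G : RFGraph) (H : Set G.V) : Prop :=
  ∀ v : G.V, G.emits v → (∀ e : G.Edge, G.s e = v → G.r e ∈ H) → v ∈ H

/-- An order-ideal of the graph monoid: a submonoid `I` such that
`x + y ∈ I` implies `x ∈ I` and `y ∈ I`. -/
def IsOrderIdeal (G : RFGraph) (I : Set G.M) : Prop :=
  (0 : G.M) ∈ I ∧ (∀ x y : G.M, x ∈ I → y ∈ I → x + y ∈ I) ∧
    (∀ x y : G.M, x + y ∈ I → x ∈ I ∧ y ∈ I)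

/-- The order-ideal generated by a subset of the graph monoid. -/
def genOI (G : RFGraph) (S : Set G.M) : Set G.M :=
  ⋂₀ {I : Set G.M | G.IsOrderIdeal I ∧ S ⊆ I}

end RFGraph

/-- For an order-ideal `I` of `M_E`, the set
`ψ(I) = {v : a_v ∈ I}` is hereditary and saturated. -/
theorem stmt7 (G : RFGraph) (I : Set G.M) (hI : G.IsOrderIdeal I) :
    G.Hereditary {v : G.V | G.av v ∈ I} ∧ G.Saturated {v : G.V | G.av v ∈ I} := by
  classical
  have avrr : ∀ v : G.V, G.emits v → G.av v = G.graphCon.mk' (G.rr v) := by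
    intro v hv
    refine (AddCon.eq _).mpr ?_
    exact AddConGen.Rel.of _ _ ⟨v, 0, hv, by simp, by simp⟩
  have hsum : ∀ (s : Finset G.Edge), (∀ e ∈ s, G.av (G.r e) ∈ I) →
      G.graphCon.mk' (∑ e ∈ s, Finsupp.single (G.r e) 1) ∈ I := by
    intro s
    induction s using Finset.induction_on with
    | empty => intro _; simpa using hI.1
    | insert a t hnotmem ih =>
      intro h
      rw [Finset.sum_insert hnotmem, map_add]
      exact hI.2.1 _ _ (h a (Finset.mem_insert_self a t))
        (ih fun e he => h e (Finset.mem_insert_of_mem he))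
  constructor
  · intro v w hv hvw
    induction hvw with
    | refl => exact hv
    | tail _ hedge ih =>
      obtain ⟨e, hse, hre⟩ := hedge
      rename_i b c _
      have hb : G.emits b := ⟨e, hse⟩
      have hmem : e ∈ (G.rowFinite b).toFinset := by
        simp [Set.Finite.mem_toFinset, hse]
      have heq : G.rr b = Finsupp.single (G.r e) 1 +
          ∑ e' ∈ (G.rowFinite b).toFinset.erase e, Finsupp.single (G.r e') 1 := by
        rw [RFGraph.rr, ← Finset.add_sum_erase _ _ hmem]
      have : G.av (G.r e) + G.graphCon.mk'
          (∑ e' ∈ (G.rowFinite b).toFinset.erase e, Finsupp.single (G.r e') 1) ∈ I := by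
        have : G.av b ∈ I := ih
        rw [avrr b hb, heq, map_add] at this
        exact this
      have := (hI.2.2 _ _ this).1
      rwa [hre] at this
  · intro v hv h
    rw [Set.mem_setOf_eq, avrr v hv]
    exact hsum _ fun e he => h e (by simpa [Set.Finite.mem_toFinset] using he)
end

section
/- Let E be a row-finite directed graph, let H ⊆ E⁰ be a hereditary and saturated subset, and let φ(H) be the order-ideal of the graph monoid M_E generated by { a_v : v ∈ H }. Then for every vertex v ∈ E⁰, a_v ∈ φ(H) if and only if v ∈ H. -/
namespace RFGraph

/-- `P_H α`: every vertex in the support of `α` belongs to `H`. -/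
def PH (G : RFGraph) (H : Set G.V) (α : G.F) : Prop := ∀ w, α w ≠ 0 → w ∈ H

lemma PH_add (G : RFGraph) (H : Set G.V) (α β : G.F) :
    G.PH H (α + β) ↔ G.PH H α ∧ G.PH H β := by
  constructor
  · intro h
    constructor <;> intro w hw <;> apply h w <;> simp [Finsupp.add_apply] <;> omega
  · rintro ⟨h1, h2⟩ w hw
    rw [Finsupp.add_apply] at hw
    rcases Nat.eq_zero_or_pos (α w) with h | h
    · exact h2 w (by omega)
    · exact h1 w (by omega)

lemma PH_single (G : RFGraph) (H : Set G.V) (x : G.V) :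
    G.PH H (Finsupp.single x 1) ↔ x ∈ H := by
  classical
  constructor
  · intro h; exact h x (by simp)
  · intro hx w hw
    rw [Finsupp.single_apply] at hw
    by_cases h : x = w
    · exact h ▸ hx
    · simp [h] at hw

lemma PH_rr (G : RFGraph) (H : Set G.V) (x : G.V) :
    G.PH H (G.rr x) ↔ ∀ e : G.Edge, G.s e = x → G.r e ∈ H := by
  constructor
  · intro h e he
    apply h (G.r e)
    rw [rr, Finsupp.finset_sum_apply]
    have hmem : e ∈ (G.rowFinite x).toFinset := by simpa using he
    have : (Finsupp.single (G.r e) 1 : G.F) (G.r e) = 1 := by simp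
    have hle : 1 ≤ ∑ e' ∈ (G.rowFinite x).toFinset,
        (Finsupp.single (G.r e') 1 : G.F) (G.r e) := by
      calc 1 = (Finsupp.single (G.r e) 1 : G.F) (G.r e) := by simp
        _ ≤ _ := Finset.single_le_sum
            (f := fun e' => (Finsupp.single (G.r e') 1 : G.F) (G.r e))
            (fun _ _ => Nat.zero_le _) hmem
    omega
  · classical
    intro h w hw
    rw [rr, Finsupp.finset_sum_apply] at hw
    obtain ⟨e, he, hne⟩ := Finset.exists_ne_zero_of_sum_ne_zero hw
    rw [Finsupp.single_apply] at hne
    have hrw : G.r e = w := by by_contra hc; simp [hc] at hne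
    have hse : G.s e = x := by simpa using he
    exact hrw ▸ h e hse

/-- The congruence "same value of `P_H`". -/
def phCon (G : RFGraph) (H : Set G.V) : AddCon G.F where
  r α β := (G.PH H α ↔ G.PH H β)
  iseqv := ⟨fun _ => Iff.rfl, Iff.symm, Iff.trans⟩
  add' := by
    intro a b c d h1 h2
    exact (G.PH_add H a c).trans
      ((and_congr h1 h2).trans (G.PH_add H b d).symm)

lemma graphCon_le_phCon (G : RFGraph) (H : Set G.V)
    (hher : G.Hereditary H) (hsat : G.Saturated H) :
    G.graphCon ≤ G.phCon H := by
  apply AddCon.addConGen_le.mpr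
  rintro α β ⟨x, α', hx, rfl, rfl⟩
  show G.PH H _ ↔ G.PH H _
  rw [G.PH_add H, G.PH_add H, G.PH_single H, G.PH_rr H]
  constructor
  · rintro ⟨hxH, hα'⟩
    refine ⟨fun e he => ?_, hα'⟩
    exact hher x (G.r e) hxH (Relation.ReflTransGen.single ⟨e, he, rfl⟩)
  · rintro ⟨hall, hα'⟩
    exact ⟨hsat x hx hall, hα'⟩

lemma PH_of_mk_eq (G : RFGraph) (H : Set G.V)
    (hher : G.Hereditary H) (hsat : G.Saturated H) {α β : G.F}
    (h : G.graphCon.mk' α = G.graphCon.mk' β) : (G.PH H α ↔ G.PH H β) := by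
  have : G.graphCon α β := G.graphCon.eq.mp h
  exact G.graphCon_le_phCon H hher hsat this

/-- The concrete order-ideal: classes of elements supported in `H`. -/
def IH (G : RFGraph) (H : Set G.V) : Set G.M :=
  { m : G.M | ∃ α : G.F, G.graphCon.mk' α = m ∧ G.PH H α }

lemma IH_isOrderIdeal (G : RFGraph) (H : Set G.V)
    (hher : G.Hereditary H) (hsat : G.Saturated H) :
    G.IsOrderIdeal (G.IH H) := by
  refine ⟨⟨0, map_zero _, fun w hw => by simp at hw⟩, ?_, ?_⟩
  · rintro x y ⟨α, rfl, hα⟩ ⟨β, rfl, hβ⟩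
    exact ⟨α + β, map_add _ _ _, (G.PH_add H α β).mpr ⟨hα, hβ⟩⟩
  · intro x y hxy
    obtain ⟨α, rfl⟩ := AddCon.mk'_surjective (c := G.graphCon) x
    obtain ⟨β, rfl⟩ := AddCon.mk'_surjective (c := G.graphCon) y
    obtain ⟨γ, hγeq, hγ⟩ := hxy
    have hsum : G.PH H (α + β) := by
      have := G.PH_of_mk_eq H hher hsat (α := γ) (β := α + β)
        (by rw [hγeq, map_add])
      exact this.mp hγ
    obtain ⟨hα, hβ⟩ := (G.PH_add H α β).mp hsum
    exact ⟨⟨α, rfl, hα⟩, ⟨β, rfl, hβ⟩⟩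

lemma av_image_subset_IH (G : RFGraph) (H : Set G.V) :
    G.av '' H ⊆ G.IH H := by
  rintro _ ⟨w, hw, rfl⟩
  exact ⟨Finsupp.single w 1, rfl, (G.PH_single H w).mpr hw⟩

end RFGraph

/-- For a hereditary saturated `H ⊆ E⁰` and the order-ideal `φ(H)`
of `M_E` generated by `{a_v : v ∈ H}`, one has `a_v ∈ φ(H)` iff `v ∈ H`. -/
theorem stmt8 (G : RFGraph) (H : Set G.V)
    (hher : G.Hereditary H) (hsat : G.Saturated H) (v : G.V) :
    G.av v ∈ G.genOI (G.av '' H) ↔ v ∈ H := by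
  constructor
  · intro h
    have hmem : G.av v ∈ G.IH H :=
      h (G.IH H) ⟨G.IH_isOrderIdeal H hher hsat, G.av_image_subset_IH H⟩
    obtain ⟨α, hαeq, hα⟩ := hmem
    have : G.PH H (Finsupp.single v 1) :=
      (G.PH_of_mk_eq H hher hsat hαeq).mp hα
    exact (G.PH_single H v).mp this
  · intro hv I hI
    exact hI.2 ⟨v, hv, rfl⟩
end

section
/- Let E be a row-finite directed graph. Every order-ideal I of the graph monoid M_E is generated as a monoid by the set { a_v : v ∈ E⁰ and a_v ∈ I }. -/
/-- Every order-ideal `I` of `M_E` is generated as a monoid by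
`{a_v : v ∈ E⁰, a_v ∈ I}`. -/
theorem stmt10 (G : RFGraph) (I : Set G.M) (hI : G.IsOrderIdeal I) :
    I = ↑(AddSubmonoid.closure {m : G.M | (∃ v : G.V, m = G.av v) ∧ m ∈ I}) := by
  ext m
  simp only [SetLike.mem_coe]
  constructor
  · intro hm
    obtain ⟨α, rfl⟩ := AddCon.mk'_surjective (c := G.graphCon) m
    induction α using Finsupp.induction with
    | zero =>
        simpa using AddSubmonoid.zero_mem _
    | single_add a b f ha hb ih =>
        rw [map_add] at hm ⊢
        obtain ⟨h1, h2⟩ := hI.2.2 _ _ hm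
        have hsingle : G.graphCon.mk' (Finsupp.single a b) = b • G.av a := by
          rw [RFGraph.av, ← map_nsmul]
          congr 1
          rw [Finsupp.smul_single, smul_eq_mul, mul_one]
        have havI : G.av a ∈ I := by
          obtain ⟨k, rfl⟩ := Nat.exists_eq_succ_of_ne_zero hb
          rw [hsingle, succ_nsmul] at h1
          exact (hI.2.2 _ _ h1).2
        refine AddSubmonoid.add_mem _ ?_ (ih h2)
        rw [hsingle]
        have hmem : G.av a ∈ {m : G.M | (∃ v : G.V, m = G.av v) ∧ m ∈ I} := ⟨⟨a, rfl⟩, havI⟩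
        exact AddSubmonoid.nsmul_mem _ (AddSubmonoid.subset_closure hmem) b
  · intro hm
    have : AddSubmonoid.closure {m : G.M | (∃ v : G.V, m = G.av v) ∧ m ∈ I} ≤
        ⟨⟨I, fun h1 h2 => hI.2.1 _ _ h1 h2⟩, hI.1⟩ :=
      AddSubmonoid.closure_le.mpr fun x hx => hx.2
    exact this hm
end

section
/- Let E be a row-finite directed graph and let H ⊆ E⁰ be a hereditary and saturated subset. Let S be the order-ideal of M_E generated by { a_v : v ∈ H }, and let G be the graph with G⁰ = E⁰ ∖ H and G¹ = { e ∈ E¹ : r(e) ∉ H } (note that s(e), r(e) ∈ G⁰ for e ∈ G¹ since H is hereditary). Then the map sending a_v to 0 for v ∈ H and a_v to a_v for v ∈ E⁰ ∖ H induces a monoid isomorphism M_E/S ≅ M_G. -/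
namespace RFGraph

/-- The quotient graph `G = (E⁰ ∖ H, {e ∈ E¹ : r(e) ∉ H})` associated with a
hereditary subset `H`. -/
def quotGraph (G : RFGraph) (H : Set G.V) (hher : G.Hereditary H) : RFGraph where
  V := {v : G.V // v ∉ H}
  Edge := {e : G.Edge // G.r e ∉ H}
  s := fun e => ⟨G.s e.1, fun hs =>
    e.2 (hher _ _ hs (Relation.ReflTransGen.single ⟨e.1, rfl, rfl⟩))⟩
  r := fun e => ⟨G.r e.1, e.2⟩
  rowFinite := fun v => by
    have h1 : (Subtype.val ⁻¹' {e : G.Edge | G.s e = v.1} :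
        Set {e : G.Edge // G.r e ∉ H}).Finite :=
      Set.Finite.preimage (Subtype.val_injective.injOn) (G.rowFinite v.1)
    exact h1.subset fun e he => congrArg Subtype.val he

/-- The congruence `∼_S` on `M_E` associated with the order-ideal `S` generated
by `{a_v : v ∈ H}`: `a ∼_S b` iff `a + e = b + f` for some `e, f ∈ S`. -/
noncomputable def quotCon (G : RFGraph) (H : Set G.V) : AddCon G.M :=
  addConGen (fun a b =>
    ∃ e ∈ G.genOI (G.av '' H), ∃ f ∈ G.genOI (G.av '' H), a + e = b + f)

end RFGraph

namespace RFGraph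

/-! ### Auxiliary lemmas -/

lemma F_add_eq_zero {V : Type} {α β : V →₀ ℕ} (h : α + β = 0) : α = 0 ∧ β = 0 := by
  have h' : ∀ v, α v + β v = 0 := fun v => by
    simpa using DFunLike.congr_fun h v
  exact ⟨Finsupp.ext fun v => (Nat.add_eq_zero.mp (h' v)).1,
         Finsupp.ext fun v => (Nat.add_eq_zero.mp (h' v)).2⟩

lemma rr_ne_zero (G : RFGraph) {v : G.V} (hv : G.emits v) : G.rr v ≠ 0 := by
  obtain ⟨e, he⟩ := hv
  intro h0
  have he' : e ∈ (G.rowFinite v).toFinset := by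
    rw [Set.Finite.mem_toFinset]; exact he
  have hz : (G.rr v) (G.r e) = 0 := by rw [h0]; rfl
  rw [rr, Finsupp.finset_sum_apply] at hz
  have hle : (1:ℕ) ≤ ∑ e' ∈ (G.rowFinite v).toFinset,
      (Finsupp.single (G.r e') (1:ℕ)) (G.r e) := by
    have := Finset.single_le_sum
      (f := fun e' => (Finsupp.single (G.r e') (1:ℕ)) (G.r e))
      (fun _ _ => Nat.zero_le _) he'
    simpa using this
  omega

/-- The congruence `α ∼ β ↔ (α = 0 ↔ β = 0)`, used to show conicality. -/
def zeroCon (G : RFGraph) : AddCon G.F where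
  r := fun α β => (α = 0 ↔ β = 0)
  iseqv := ⟨fun _ => Iff.rfl, Iff.symm, Iff.trans⟩
  add' := by
    intro w x y z h1 h2
    constructor <;> intro h
    · obtain ⟨hw, hy⟩ := F_add_eq_zero h
      rw [h1.mp hw, h2.mp hy, add_zero]
    · obtain ⟨hx, hz⟩ := F_add_eq_zero h
      rw [h1.mpr hx, h2.mpr hz, add_zero]

lemma graphCon_le_zeroCon (G : RFGraph) : G.graphCon ≤ G.zeroCon := by
  apply AddCon.addConGen_le.mpr
  rintro α β ⟨x, α', hx, rfl, rfl⟩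
  constructor <;> intro h <;> exfalso
  · have := (F_add_eq_zero h).1
    rw [Finsupp.single_eq_zero] at this
    exact one_ne_zero this
  · exact G.rr_ne_zero hx (F_add_eq_zero h).1

lemma M_conical (G : RFGraph) {a b : G.M} (h : a + b = 0) : a = 0 ∧ b = 0 := by
  obtain ⟨α, rfl⟩ := AddCon.mk'_surjective (c := G.graphCon) a
  obtain ⟨β, rfl⟩ := AddCon.mk'_surjective (c := G.graphCon) b
  have h2 : G.graphCon (α + β) 0 := by
    rw [← AddCon.eq]
    have : (G.graphCon.mk' (α + β) : G.M) = G.graphCon.mk' 0 := by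
      rw [map_add, map_zero, h]
    simpa [AddCon.coe_mk'] using this
  have hz : α + β = 0 := (G.graphCon_le_zeroCon h2).mpr rfl
  obtain ⟨h1, h2⟩ := F_add_eq_zero hz
  rw [h1, h2]
  simp

section Main

variable (G : RFGraph) (H : Set G.V) (hher : G.Hereditary H) (hsat : G.Saturated H)

open Classical in
/-- The vertex map `v ↦ 0` (`v ∈ H`), `v ↦ a_v` (`v ∉ H`). -/
noncomputable def target : G.V → (G.quotGraph H hher).M := fun v =>
  if h : v ∈ H then 0 else (G.quotGraph H hher).av ⟨v, h⟩

lemma target_mem {v : G.V} (hv : v ∈ H) : G.target H hher v = 0 := by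
  rw [target, dif_pos hv]

lemma target_not_mem {v : G.V} (hv : v ∉ H) :
    G.target H hher v = (G.quotGraph H hher).av ⟨v, hv⟩ := by
  rw [target, dif_neg hv]

/-- Key sum bijection: for `x ∉ H` and `g` vanishing on `H`, summing `g ∘ r`
over the edges of `E` emitted by `x` equals summing over the edges of `G`. -/
lemma sum_edges {N : Type*} [AddCommMonoid N] (g : G.V → N) (hg : ∀ w ∈ H, g w = 0)
    (x : G.V) (hx : x ∉ H) :
    ∑ e ∈ (G.rowFinite x).toFinset, g (G.r e)
      = ∑ eq ∈ ((G.quotGraph H hher).rowFinite ⟨x, hx⟩).toFinset, g (G.r eq.1) := by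
  classical
  rw [← Finset.sum_filter_of_ne (p := fun e => G.r e ∉ H)
    (fun e _ hne hH => hne (hg _ hH))]
  refine Finset.sum_bij' (fun e he => (⟨e, (Finset.mem_filter.mp he).2⟩ : {e // G.r e ∉ H}))
    (fun eq _ => eq.1) ?_ ?_ ?_ ?_ ?_
  · intro a ha
    refine (Set.Finite.mem_toFinset _).mpr ?_
    show (G.quotGraph H hher).s _ = ⟨x, hx⟩
    apply Subtype.ext
    have : a ∈ (G.rowFinite x).toFinset := (Finset.mem_filter.mp ha).1
    rw [Set.Finite.mem_toFinset] at this
    exact this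
  · intro b hb
    rw [Set.Finite.mem_toFinset] at hb
    rw [Finset.mem_filter, Set.Finite.mem_toFinset]
    exact ⟨congrArg Subtype.val hb, b.2⟩
  · intro a _; rfl
  · intro a _; rfl
  · intro a _; rfl

/-- The lift of `target` to the free monoid. -/
noncomputable def pi0 : G.F →+ (G.quotGraph H hher).M :=
  Finsupp.liftAddHom fun v => multiplesHom _ (G.target H hher v)

lemma pi0_single (v : G.V) :
    G.pi0 H hher (Finsupp.single v 1) = G.target H hher v := by
  rw [pi0, Finsupp.liftAddHom_apply_single, multiplesHom_apply, one_nsmul]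

include hsat in
lemma emits_quot {x : G.V} (hx : x ∉ H) (hemit : G.emits x) :
    (G.quotGraph H hher).emits ⟨x, hx⟩ := by
  by_contra hne
  apply hx
  apply hsat x hemit
  intro e he
  by_contra hrH
  exact hne ⟨⟨e, hrH⟩, Subtype.ext he⟩

include hsat in
lemma pi0_rr {x : G.V} (hemit : G.emits x) :
    G.pi0 H hher (G.rr x) = G.target H hher x := by
  rw [rr, map_sum]
  simp only [pi0_single]
  by_cases hx : x ∈ H
  · rw [target_mem G H hher hx]
    apply Finset.sum_eq_zero
    intro e he
    rw [Set.Finite.mem_toFinset] at he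
    exact target_mem G H hher
      (hher x (G.r e) hx (Relation.ReflTransGen.single ⟨e, he, rfl⟩))
  · rw [sum_edges G H hher (G.target H hher) (fun w hw => target_mem G H hher hw) x hx]
    have hQemit : (G.quotGraph H hher).emits ⟨x, hx⟩ :=
      emits_quot G H hher hsat hx hemit
    have key : ((G.quotGraph H hher).graphCon)
        (Finsupp.single (⟨x, hx⟩ : {v // v ∉ H}) 1) ((G.quotGraph H hher).rr ⟨x, hx⟩) :=
      AddConGen.Rel.of _ _ ⟨⟨x, hx⟩, 0, hQemit, (add_zero _).symm, (add_zero _).symm⟩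
    have hmk : (G.quotGraph H hher).av ⟨x, hx⟩
        = (G.quotGraph H hher).graphCon.mk' ((G.quotGraph H hher).rr ⟨x, hx⟩) := by
      erw [av, AddCon.coe_mk']
      exact (AddCon.eq _).mpr key
    erw [target_not_mem G H hher hx, hmk, rr, map_sum]
    apply Finset.sum_congr rfl
    intro eq _
    rw [target_not_mem G H hher eq.2]
    rfl

include hsat in
lemma graphCon_le_ker : G.graphCon ≤ AddCon.ker (G.pi0 H hher) := by
  apply AddCon.addConGen_le.mpr
  rintro α β ⟨x, α', hx, rfl, rfl⟩
  show G.pi0 H hher _ = G.pi0 H hher _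
  rw [map_add, map_add, pi0_single, pi0_rr G H hher hsat hx]

/-- The induced map `M_E → M_G`. -/
noncomputable def piM : G.M →+ (G.quotGraph H hher).M :=
  G.graphCon.lift (G.pi0 H hher) (graphCon_le_ker G H hher hsat)

lemma piM_av (v : G.V) :
    G.piM H hher hsat (G.av v) = G.target H hher v := by
  rw [av, piM, AddCon.lift_mk', pi0_single]

lemma genOI_subset_ker :
    G.genOI (G.av '' H) ⊆ {m | G.piM H hher hsat m = 0} := by
  intro m hm
  refine hm {m | G.piM H hher hsat m = 0} ⟨⟨?_, ?_, ?_⟩, ?_⟩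
  · simp
  · intro x y hx hy
    simp only [Set.mem_setOf_eq, map_add] at *
    rw [hx, hy, add_zero]
  · intro x y hxy
    simp only [Set.mem_setOf_eq, map_add] at *
    exact M_conical _ hxy
  · rintro _ ⟨v, hv, rfl⟩
    show G.piM H hher hsat (G.av v) = 0
    rw [piM_av, target_mem G H hher hv]

lemma quotCon_le_ker : G.quotCon H ≤ AddCon.ker (G.piM H hher hsat) := by
  apply AddCon.addConGen_le.mpr
  rintro a b ⟨e, he, f, hf, heq⟩
  show G.piM H hher hsat a = G.piM H hher hsat b
  have h1 : G.piM H hher hsat e = 0 := genOI_subset_ker G H hher hsat he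
  have h2 : G.piM H hher hsat f = 0 := genOI_subset_ker G H hher hsat hf
  have := congrArg (G.piM H hher hsat) heq
  rw [map_add, map_add, h1, h2, add_zero, add_zero] at this
  exact this

/-- The induced map `M_E/S → M_G`. -/
noncomputable def phi : (G.quotCon H).Quotient →+ (G.quotGraph H hher).M :=
  (G.quotCon H).lift (G.piM H hher hsat) (quotCon_le_ker G H hher hsat)

lemma genOI_isOrderIdeal : G.IsOrderIdeal (G.genOI (G.av '' H)) := by
  refine ⟨?_, ?_, ?_⟩
  · intro I hI
    exact hI.1.1
  · intro x y hx hy I hI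
    exact hI.1.2.1 x y (hx I hI) (hy I hI)
  · intro x y hxy
    constructor <;> intro I hI
    · exact (hI.1.2.2 x y (hxy I hI)).1
    · exact (hI.1.2.2 x y (hxy I hI)).2

lemma av_mem_genOI {v : G.V} (hv : v ∈ H) : G.av v ∈ G.genOI (G.av '' H) :=
  fun _ hI => hI.2 ⟨v, hv, rfl⟩

lemma kappa_av_zero {v : G.V} (hv : v ∈ H) :
    (G.quotCon H).mk' (G.av v) = 0 := by
  have hrel : (G.quotCon H) (G.av v) 0 := by
    refine AddConGen.Rel.of _ _ ⟨0, (genOI_isOrderIdeal G H).1, G.av v,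
      av_mem_genOI G H hv, ?_⟩
    rw [add_zero, zero_add]
  have : ((G.quotCon H).mk' (G.av v) : (G.quotCon H).Quotient) = (G.quotCon H).mk' 0 := by
    rw [AddCon.coe_mk']
    exact (AddCon.eq _).mpr hrel
  rw [this, map_zero]

/-- The lift of `v ↦ [a_v]` to the free monoid of the quotient graph. -/
noncomputable def psi0 : (G.quotGraph H hher).F →+ (G.quotCon H).Quotient :=
  Finsupp.liftAddHom fun vq => multiplesHom _ ((G.quotCon H).mk' (G.av vq.1))

lemma psi0_single (vq : (G.quotGraph H hher).V) :
    G.psi0 H hher (Finsupp.single vq 1) = (G.quotCon H).mk' (G.av vq.1) := by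
  erw [psi0, Finsupp.liftAddHom_apply_single, multiplesHom_apply, one_nsmul]

lemma kappa_av_rr {x : G.V} (hemit : G.emits x) :
    (G.quotCon H).mk' (G.av x)
      = ∑ e ∈ (G.rowFinite x).toFinset, (G.quotCon H).mk' (G.av (G.r e)) := by
  have key : G.graphCon (Finsupp.single x 1) (G.rr x) :=
    AddConGen.Rel.of _ _ ⟨x, 0, hemit, (add_zero _).symm, (add_zero _).symm⟩
  have hmk : G.av x = G.graphCon.mk' (G.rr x) := by
    rw [av, AddCon.coe_mk']
    exact (AddCon.eq _).mpr key
  rw [hmk, rr, map_sum, map_sum]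
  rfl

lemma psi0_rr {xq : (G.quotGraph H hher).V} (hemit : (G.quotGraph H hher).emits xq) :
    G.psi0 H hher ((G.quotGraph H hher).rr xq) = (G.quotCon H).mk' (G.av xq.1) := by
  obtain ⟨eq, heq⟩ := hemit
  have hemitE : G.emits xq.1 := ⟨eq.1, congrArg Subtype.val heq⟩
  erw [rr, map_sum]
  simp only [psi0_single]
  rw [kappa_av_rr G H hemitE]
  rw [sum_edges G H hher (fun w => (G.quotCon H).mk' (G.av w))
    (fun w hw => kappa_av_zero G H hw) xq.1 xq.2]
  exact Finset.sum_congr rfl fun e _ => rfl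

lemma graphConQ_le_ker :
    (G.quotGraph H hher).graphCon ≤ AddCon.ker (G.psi0 H hher) := by
  apply AddCon.addConGen_le.mpr
  rintro α β ⟨xq, α', hxq, rfl, rfl⟩
  show G.psi0 H hher _ = G.psi0 H hher _
  rw [map_add, map_add, psi0_single, psi0_rr G H hher hxq]

/-- The induced map `M_G → M_E/S`. -/
noncomputable def psi : (G.quotGraph H hher).M →+ (G.quotCon H).Quotient :=
  (G.quotGraph H hher).graphCon.lift (G.psi0 H hher) (graphConQ_le_ker G H hher)

lemma psi_av (vq : (G.quotGraph H hher).V) :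
    G.psi H hher ((G.quotGraph H hher).av vq) = (G.quotCon H).mk' (G.av vq.1) := by
  erw [av, psi, AddCon.lift_mk', psi0_single]

lemma phi_kappa_av (v : G.V) :
    G.phi H hher hsat ((G.quotCon H).mk' (G.av v)) = G.target H hher v := by
  rw [phi, AddCon.lift_mk', piM_av]

lemma psi_phi : (G.psi H hher).comp (G.phi H hher hsat) = AddMonoidHom.id _ := by
  have hsurj : Function.Surjective
      (((G.quotCon H).mk'.comp G.graphCon.mk' : G.F →+ (G.quotCon H).Quotient)) :=
    AddCon.mk'_surjective.comp AddCon.mk'_surjective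
  have hcomp : ((G.psi H hher).comp (G.phi H hher hsat)).comp
      ((G.quotCon H).mk'.comp G.graphCon.mk')
      = (G.quotCon H).mk'.comp G.graphCon.mk' := by
    apply Finsupp.addHom_ext'
    intro v
    refine AddMonoidHom.ext_nat (A := (G.quotCon H).Quotient) ?_
    simp only [AddMonoidHom.comp_apply, Finsupp.singleAddHom_apply]
    show G.psi H hher (G.phi H hher hsat ((G.quotCon H).mk' (G.av v)))
      = (G.quotCon H).mk' (G.av v)
    rw [phi_kappa_av]
    by_cases hv : v ∈ H
    · rw [target_mem G H hher hv, map_zero, kappa_av_zero G H hv]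
    · rw [target_not_mem G H hher hv]
      exact psi_av G H hher ⟨v, hv⟩
  refine AddMonoidHom.ext fun q => ?_
  obtain ⟨α, rfl⟩ := hsurj q
  exact DFunLike.congr_fun hcomp α

lemma phi_psi : (G.phi H hher hsat).comp (G.psi H hher) = AddMonoidHom.id _ := by
  have hcomp : ((G.phi H hher hsat).comp (G.psi H hher)).comp
      (G.quotGraph H hher).graphCon.mk' = (G.quotGraph H hher).graphCon.mk' := by
    apply Finsupp.addHom_ext'
    intro vq
    refine AddMonoidHom.ext_nat (A := (G.quotGraph H hher).M) ?_
    simp only [AddMonoidHom.comp_apply, Finsupp.singleAddHom_apply]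
    show G.phi H hher hsat (G.psi H hher ((G.quotGraph H hher).av vq))
      = (G.quotGraph H hher).av vq
    rw [psi_av, phi_kappa_av, target_not_mem G H hher vq.2]
    exact congrArg _ (Subtype.ext rfl)
  refine AddMonoidHom.ext fun q => ?_
  obtain ⟨α, rfl⟩ := AddCon.mk'_surjective q
  exact DFunLike.congr_fun hcomp α

end Main

end RFGraph

/-- For a hereditary saturated `H`, the map `a_v ↦ 0` (`v ∈ H`),
`a_v ↦ a_v` (`v ∉ H`) induces a monoid isomorphism `M_E/S ≅ M_G`, where `S` is the
order-ideal generated by `{a_v : v ∈ H}` and `G` is the quotient graph. -/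
theorem stmt11 (G : RFGraph) (H : Set G.V)
    (hher : G.Hereditary H) (hsat : G.Saturated H) :
    ∃ φ : (G.quotCon H).Quotient ≃+ (G.quotGraph H hher).M,
      (∀ (v : G.V) (hv : v ∉ H),
          φ ((G.quotCon H).mk' (G.av v)) = (G.quotGraph H hher).av ⟨v, hv⟩) ∧
      (∀ v ∈ H, (G.quotCon H).mk' (G.av v) = 0) := by
  refine ⟨{ toFun := G.phi H hher hsat, invFun := G.psi H hher,
            left_inv := fun q => DFunLike.congr_fun (RFGraph.psi_phi G H hher hsat) q,
            right_inv := fun q => DFunLike.congr_fun (RFGraph.phi_psi G H hher hsat) q,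
            map_add' := map_add _ }, ?_, ?_⟩
  · intro v hv
    show G.phi H hher hsat ((G.quotCon H).mk' (G.av v)) = _
    rw [RFGraph.phi_kappa_av, RFGraph.target_not_mem G H hher hv]
  · intro v hv
    exact RFGraph.kappa_av_zero G H hv
end

section
/- Let E be a finite cofinal directed graph containing no loops. Then E has a sink v, and the graph monoid M_E is a free abelian monoid of rank one generated by a_v; that is, M_E is isomorphic to (ℕ, +) via n ↦ n·a_v. -/
namespace RFGraph

/-- A sink is a vertex emitting no edges. -/
def IsSink (G : RFGraph) (v : G.V) : Prop := ¬ G.emits v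

/-- An infinite directed path, given by its sequence of edges. -/
def IsInfPath (G : RFGraph) (γ : ℕ → G.Edge) : Prop :=
  ∀ n : ℕ, G.r (γ n) = G.s (γ (n + 1))

/-- `E` is cofinal: every vertex connects to a vertex on any element of `E^{≤∞}`,
i.e. to every sink and to a vertex on every infinite path. -/
def Cofinal (G : RFGraph) : Prop :=
  (∀ v w : G.V, G.IsSink w → G.reaches v w) ∧
  (∀ (v : G.V) (γ : ℕ → G.Edge), G.IsInfPath γ → ∃ n : ℕ, G.reaches v (G.s (γ n)))

end RFGraph

namespace RFGraph

/-- `a` is a child of `b`: there is an edge from `b` to `a`. -/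
def child (G : RFGraph) (a b : G.V) : Prop := ∃ e : G.Edge, G.s e = b ∧ G.r e = a

lemma transGen_child {G : RFGraph} {a b : G.V} (h : Relation.TransGen G.child a b) :
    ∃ e : G.Edge, G.s e = b ∧ G.reaches (G.r e) a := by
  induction h using Relation.TransGen.head_induction_on with
  | single h =>
    obtain ⟨e, hs, hr⟩ := h
    exact ⟨e, hs, hr ▸ Relation.ReflTransGen.refl⟩
  | head h _ ih =>
    obtain ⟨e', hs', hr'⟩ := h
    obtain ⟨e, hs, hre⟩ := ih
    exact ⟨e, hs, Relation.ReflTransGen.tail hre ⟨e', hs', hr'⟩⟩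

open Classical in
/-- Number of directed paths from a vertex to a sink (1 for a sink). -/
noncomputable def weight (G : RFGraph) (hwf : WellFounded G.child) : G.V → ℕ :=
  hwf.fix (fun w ih =>
    if h : G.emits w then
      ∑ e ∈ (G.rowFinite w).toFinset.attach,
        ih (G.r e.1) ⟨e.1, (G.rowFinite w).mem_toFinset.mp e.2, rfl⟩
    else 1)

open Classical in
lemma weight_eq (G : RFGraph) (hwf : WellFounded G.child) (w : G.V) :
    G.weight hwf w =
      if G.emits w then ∑ e ∈ (G.rowFinite w).toFinset, G.weight hwf (G.r e) else 1 := by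
  rw [weight, hwf.fix_eq]
  split
  · exact Finset.sum_attach ((G.rowFinite w).toFinset) (fun e => G.weight hwf (G.r e))
  · rfl

end RFGraph

/-- A finite cofinal graph with no loops has a sink `v`, and
`M_E` is free abelian of rank one generated by `a_v`: `M_E ≅ ℕ` via `n ↦ n • a_v`. -/
theorem stmt12 (G : RFGraph) [Nonempty G.V] [Finite G.V] [Finite G.Edge]
    (hcof : G.Cofinal)
    (hnoloop : ∀ e : G.Edge, ¬ G.reaches (G.r e) (G.s e)) :
    ∃ v : G.V, G.IsSink v ∧ ∃ φ : ℕ ≃+ G.M, ∀ n : ℕ, φ n = n • G.av v := by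
  classical
  -- the child relation is well-founded
  have hirr : ∀ w : G.V, ¬ Relation.TransGen G.child w w := by
    intro w hw
    obtain ⟨e, hs, hre⟩ := RFGraph.transGen_child hw
    exact hnoloop e (hs ▸ hre)
  have hwf : WellFounded G.child := by
    have : IsTrans G.V (Relation.TransGen G.child) := inferInstance
    have : IsIrrefl G.V (Relation.TransGen G.child) := ⟨hirr⟩
    exact Subrelation.wf (fun h => Relation.TransGen.single h)
      (Finite.wellFounded_of_trans_of_irrefl (Relation.TransGen G.child))
  -- existence of a sink
  obtain ⟨v, -, hvmin⟩ := hwf.has_min Set.univ ⟨Classical.arbitrary G.V, trivial⟩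
  have hv : G.IsSink v := by
    rintro ⟨e, he⟩
    exact hvmin (G.r e) trivial ⟨e, he, rfl⟩
  refine ⟨v, hv, ?_⟩
  -- uniqueness of the sink
  have hsinkuniq : ∀ w : G.V, G.IsSink w → w = v := by
    intro w hw
    have h := hcof.1 w v hv
    rcases Relation.ReflTransGen.cases_head h with h | ⟨c, ⟨e, he, -⟩, -⟩
    · exact h
    · exact absurd ⟨e, he⟩ hw
  set wt : G.V → ℕ := G.weight hwf with hwt
  have hwtv : wt v = 1 := by rw [hwt, G.weight_eq hwf, if_neg hv]
  have hwtemit : ∀ w : G.V, G.emits w →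
      wt w = ∑ e ∈ (G.rowFinite w).toFinset, wt (G.r e) := by
    intro w hw
    rw [hwt, G.weight_eq hwf, if_pos hw]
  -- the degree homomorphism
  set D : G.F →+ ℕ := Finsupp.liftAddHom (fun w => AddMonoidHom.mulRight (wt w)) with hD
  have hDsingle : ∀ (w : G.V) (n : ℕ), D (Finsupp.single w n) = n * wt w := by
    intro w n
    rw [hD, Finsupp.liftAddHom_apply_single]
    rfl
  have hDrr : ∀ w : G.V, G.emits w → D (G.rr w) = wt w := by
    intro w hw
    rw [RFGraph.rr, map_sum, hwtemit w hw]
    exact Finset.sum_congr rfl fun e _ => by rw [hDsingle, one_mul]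
  have hstepD : ∀ α β : G.F, G.step α β → D α = D β := by
    rintro α β ⟨x, α', hx, rfl, rfl⟩
    rw [map_add, map_add, hDsingle, one_mul, hDrr x hx]
  have hle : G.graphCon ≤ AddCon.ker D := AddCon.addConGen_le.mpr hstepD
  set ψ : G.M →+ ℕ := G.graphCon.lift D hle with hψ
  have hψmk : ∀ α : G.F, ψ (G.graphCon.mk' α) = D α := fun α => AddCon.lift_mk' hle α
  -- the key lemma: a_w = wt w • a_v
  have hkey : ∀ w : G.V, G.graphCon.mk' (Finsupp.single w 1) = wt w • G.av v := by
    intro w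
    induction w using hwf.induction with
    | _ w ih =>
      by_cases hx : G.emits w
      · have hstep : G.step (Finsupp.single w 1) (G.rr w) :=
          ⟨w, 0, hx, (add_zero _).symm, (add_zero _).symm⟩
        have h1 : G.graphCon (Finsupp.single w 1) (G.rr w) := AddConGen.Rel.of _ _ hstep
        have h2 : G.graphCon.mk' (Finsupp.single w 1) = G.graphCon.mk' (G.rr w) :=
          G.graphCon.eq.mpr h1
        rw [h2, RFGraph.rr, map_sum]
        have h3 : ∀ e ∈ (G.rowFinite w).toFinset,
            G.graphCon.mk' (Finsupp.single (G.r e) 1) = wt (G.r e) • G.av v := by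
          intro e he
          exact ih (G.r e) ⟨e, (G.rowFinite w).mem_toFinset.mp he, rfl⟩
        rw [Finset.sum_congr rfl h3, ← Finset.sum_smul, ← hwtemit w hx]
      · have : w = v := hsinkuniq w hx
        subst this
        rw [hwtv, one_smul]
        rfl
  have hgen : ∀ α : G.F, G.graphCon.mk' α = D α • G.av v := by
    intro α
    induction α using Finsupp.induction with
    | zero =>
      rw [map_zero, map_zero]
      exact (zero_smul ℕ (G.av v)).symm
    | single_add w n f _ _ ihf =>
      have hsm : (Finsupp.single w n : G.F) = n • Finsupp.single w 1 := by
        rw [Finsupp.smul_single, smul_eq_mul, mul_one]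
      have h1 : G.graphCon.mk' (Finsupp.single w n) = (n * wt w) • G.av v := by
        rw [hsm, map_nsmul, hkey w, smul_smul]
      rw [map_add, map_add, h1, hDsingle, ihf, add_smul]
  refine ⟨⟨⟨fun n => n • G.av v, fun m => ψ m, ?_, ?_⟩, ?_⟩, fun n => rfl⟩
  · intro n
    simp only [map_nsmul]
    have : ψ (G.av v) = 1 := by
      rw [RFGraph.av, hψmk, hDsingle, one_mul, hwtv]
    rw [this, smul_eq_mul, mul_one]
  · intro m
    obtain ⟨α, rfl⟩ := G.graphCon.mk'_surjective m
    simp only [hψmk]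
    exact (hgen α).symm
  · intro m n
    exact add_nsmul _ m n
end

section
/- Let E be a row-finite directed graph. For every finite complete subgraph X of E, the assignment a_v ↦ a_v (v ∈ X⁰) induces a monoid homomorphism M_X → M_E, and: (i) every element of M_E lies in the image of M_X → M_E for some finite complete subgraph X of E; (ii) if two elements of M_X have the same image in M_E, then there is a finite complete subgraph Y of E containing X such that the two elements already have the same image in M_Y. -/
namespace RFGraph

/-- `(V', E')` is a subgraph of `G`. -/
def IsSubgraph (G : RFGraph) (V' : Set G.V) (E' : Set G.Edge) : Prop :=
  ∀ e ∈ E', G.s e ∈ V' ∧ G.r e ∈ V'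

/-- `(V', E')` is complete: any vertex of `V'` emitting at least one edge of `E'`
has all of its edges (in `G`) inside `E'`. -/
def IsCompleteSub (G : RFGraph) (V' : Set G.V) (E' : Set G.Edge) : Prop :=
  ∀ v ∈ V', (∃ e ∈ E', G.s e = v) → ∀ e : G.Edge, G.s e = v → e ∈ E'

end RFGraph

namespace RFGraph

/-- The row-finite graph determined by a subgraph `(V', E')` of `G`. -/
def subRF (G : RFGraph) (V' : Set G.V) (E' : Set G.Edge)
    (hsub : G.IsSubgraph V' E') : RFGraph where
  V := ↥V'
  Edge := ↥E'
  s := fun e => ⟨G.s e.1, (hsub e.1 e.2).1⟩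
  r := fun e => ⟨G.r e.1, (hsub e.1 e.2).2⟩
  rowFinite := fun v => by
    have h1 : (Subtype.val ⁻¹' {e : G.Edge | G.s e = v.1} : Set ↥E').Finite :=
      Set.Finite.preimage (Subtype.val_injective.injOn) (G.rowFinite v.1)
    exact h1.subset fun e he => congrArg Subtype.val he

end RFGraph
attribute [reducible] RFGraph.subRF

namespace RFGraph

variable (G : RFGraph)

lemma av_def (v : G.V) : G.av v = G.graphCon.mk' (Finsupp.single v 1) := rfl

lemma rr_def (v : G.V) :
    G.rr v = ∑ e ∈ (G.rowFinite v).toFinset, Finsupp.single (G.r e) 1 := rfl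

section Iota

variable {V' : Set G.V} {E' : Set G.Edge}

/-- The canonical embedding `F_X →+ F_G`. -/
noncomputable def iota (hsub : G.IsSubgraph V' E') : (G.subRF V' E' hsub).F →+ G.F :=
  Finsupp.mapDomain.addMonoidHom Subtype.val

variable (hsub : G.IsSubgraph V' E')

lemma iota_apply (α : (G.subRF V' E' hsub).F) :
    G.iota hsub α = Finsupp.mapDomain Subtype.val α := rfl

lemma iota_inj : Function.Injective (G.iota hsub) :=
  Finsupp.mapDomain_injective Subtype.val_injective

lemma iota_single (v : ↥V') (n : ℕ) :
    G.iota hsub (Finsupp.single v n) = Finsupp.single (v : G.V) n :=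
  Finsupp.mapDomain_single

lemma iota_subtypeDomain (α : G.F) (h : ↑α.support ⊆ V') :
    G.iota hsub (α.subtypeDomain (· ∈ V')) = α := by
  ext a
  rw [iota_apply]
  by_cases ha : a ∈ V'
  · rw [show a = ((⟨a, ha⟩ : ↥V') : G.V) from rfl,
      Finsupp.mapDomain_apply Subtype.val_injective]
    rfl
  · rw [Finsupp.mapDomain_notin_range _ _ (by rwa [Subtype.range_val])]
    by_contra hne
    exact ha (h (Finsupp.mem_support_iff.mpr fun h0 => hne h0.symm))

lemma sub_emits_iff (x : ↥V') :
    (G.subRF V' E' hsub).emits x ↔ ∃ e : G.Edge, e ∈ E' ∧ G.s e = x.1 := by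
  constructor
  · rintro ⟨e, he⟩
    exact ⟨e.1, e.2, congrArg Subtype.val he⟩
  · rintro ⟨e, he, hse⟩
    exact ⟨⟨e, he⟩, Subtype.ext hse⟩

lemma iota_rr (hcomp : G.IsCompleteSub V' E') (x : ↥V')
    (hx : (G.subRF V' E' hsub).emits x) :
    G.iota hsub ((G.subRF V' E' hsub).rr x) = G.rr (x : G.V) := by
  obtain ⟨e0, he0, hse0⟩ := (G.sub_emits_iff hsub x).mp hx
  have hall : ∀ f : G.Edge, G.s f = x.1 → f ∈ E' := hcomp x.1 x.2 ⟨e0, he0, hse0⟩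
  rw [rr_def, rr_def, map_sum]
  refine Finset.sum_bij' (fun e _ => e.1)
    (fun f hf => ⟨f, hall f ((G.rowFinite x.1).mem_toFinset.mp hf)⟩) ?_ ?_ ?_ ?_ ?_
  · intro e he
    rw [Set.Finite.mem_toFinset] at he ⊢
    exact congrArg Subtype.val he
  · intro f hf
    rw [Set.Finite.mem_toFinset] at hf ⊢
    exact Subtype.ext hf
  · intro e he
    rfl
  · intro f hf
    rfl
  · intro e he
    rw [iota_single]

lemma step_iota (hcomp : G.IsCompleteSub V' E') {α β : (G.subRF V' E' hsub).F}
    (h : (G.subRF V' E' hsub).step α β) :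
    G.step (G.iota hsub α) (G.iota hsub β) := by
  obtain ⟨x, α', hx, rfl, rfl⟩ := h
  obtain ⟨e, he⟩ := hx
  refine ⟨x.1, G.iota hsub α', ⟨e.1, congrArg Subtype.val he⟩, ?_, ?_⟩
  · rw [map_add, iota_single]
  · rw [map_add, G.iota_rr hsub hcomp x ⟨e, he⟩]

end Iota

/-- Transfer of the congruence along a step-preserving hom. -/
lemma con_of_step_map {A B : RFGraph} (f : A.F →+ B.F)
    (hf : ∀ a b, A.step a b → B.step (f a) (f b)) {α β : A.F} (h : A.graphCon α β) :
    B.graphCon (f α) (f β) := by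
  have hle : A.graphCon ≤ AddCon.comap f f.map_add B.graphCon :=
    AddCon.addConGen_le.mpr fun a b hab =>
      (AddCon.comap_rel _).mpr (AddConGen.Rel.of _ _ (hf a b hab))
  exact (AddCon.comap_rel _).mp (hle h)

section Hom

variable {V' : Set G.V} {E' : Set G.Edge}

lemma con_iota (hsub : G.IsSubgraph V' E') (hcomp : G.IsCompleteSub V' E')
    {α β : (G.subRF V' E' hsub).F} (h : (G.subRF V' E' hsub).graphCon α β) :
    G.graphCon (G.iota hsub α) (G.iota hsub β) :=
  con_of_step_map (G.iota hsub) (fun _ _ hs => G.step_iota hsub hcomp hs) h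

/-- The induced hom `M_X →+ M_G`. -/
noncomputable def toBig (hsub : G.IsSubgraph V' E') (hcomp : G.IsCompleteSub V' E') :
    (G.subRF V' E' hsub).M →+ G.M :=
  AddCon.lift _ (G.graphCon.mk'.comp (G.iota hsub)) fun a b h =>
    (AddCon.eq _).mpr (G.con_iota hsub hcomp h)

lemma toBig_mk' (hsub : G.IsSubgraph V' E') (hcomp : G.IsCompleteSub V' E')
    (α : (G.subRF V' E' hsub).F) :
    G.toBig hsub hcomp ((G.subRF V' E' hsub).graphCon.mk' α) =
      G.graphCon.mk' (G.iota hsub α) :=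
  AddCon.lift_mk' _ _

lemma toBig_av (hsub : G.IsSubgraph V' E') (hcomp : G.IsCompleteSub V' E') (v : ↥V') :
    G.toBig hsub hcomp ((G.subRF V' E' hsub).av v) = G.av v.1 := by
  rw [av_def, toBig_mk', iota_single, av_def]

/-- Homs out of `M_X` are determined by their values on generators. -/
lemma hom_ext (hsub : G.IsSubgraph V' E') {N : Type*} [AddCommMonoid N]
    (f g : (G.subRF V' E' hsub).M →+ N)
    (h : ∀ v : ↥V', f ((G.subRF V' E' hsub).av v) = g ((G.subRF V' E' hsub).av v)) :
    f = g := by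
  have key : f.comp (G.subRF V' E' hsub).graphCon.mk' =
      g.comp (G.subRF V' E' hsub).graphCon.mk' := by
    apply Finsupp.addHom_ext'
    intro v
    ext
    exact h v
  refine DFunLike.ext _ _ fun m => ?_
  obtain ⟨a, rfl⟩ := AddCon.mk'_surjective m
  exact DFunLike.congr_fun key a

end Hom

section Incl

variable {V₁ V₂ : Set G.V} {E₁ E₂ : Set G.Edge}

/-- The inclusion `F_{X₁} →+ F_{X₂}`. -/
noncomputable def incl (h₁ : G.IsSubgraph V₁ E₁) (h₂ : G.IsSubgraph V₂ E₂)
    (hV : V₁ ⊆ V₂) : (G.subRF V₁ E₁ h₁).F →+ (G.subRF V₂ E₂ h₂).F :=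
  Finsupp.mapDomain.addMonoidHom (Set.inclusion hV)

variable (h₁ : G.IsSubgraph V₁ E₁) (h₂ : G.IsSubgraph V₂ E₂) (hV : V₁ ⊆ V₂)

lemma incl_apply (α : (G.subRF V₁ E₁ h₁).F) :
    G.incl h₁ h₂ hV α = Finsupp.mapDomain (Set.inclusion hV) α := rfl

lemma iota_incl (α : (G.subRF V₁ E₁ h₁).F) :
    G.iota h₂ (G.incl h₁ h₂ hV α) = G.iota h₁ α := by
  rw [iota_apply, iota_apply, incl_apply, ← Finsupp.mapDomain_comp]
  rfl

lemma step_incl (hE : E₁ ⊆ E₂) (hc₁ : G.IsCompleteSub V₁ E₁)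
    (hc₂ : G.IsCompleteSub V₂ E₂)
    {α β : (G.subRF V₁ E₁ h₁).F} (h : (G.subRF V₁ E₁ h₁).step α β) :
    (G.subRF V₂ E₂ h₂).step (G.incl h₁ h₂ hV α) (G.incl h₁ h₂ hV β) := by
  obtain ⟨x, α', hx, rfl, rfl⟩ := h
  obtain ⟨e, he, hse⟩ := (G.sub_emits_iff h₁ x).mp hx
  have hx₂ : (G.subRF V₂ E₂ h₂).emits (Set.inclusion hV x) :=
    (G.sub_emits_iff h₂ _).mpr ⟨e, hE he, hse⟩
  refine ⟨Set.inclusion hV x, G.incl h₁ h₂ hV α', hx₂, ?_, ?_⟩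
  · rw [map_add, incl_apply, incl_apply, Finsupp.mapDomain_single]
  · rw [map_add]
    congr 1
    apply G.iota_inj h₂
    rw [iota_incl, G.iota_rr h₁ hc₁ x hx, G.iota_rr h₂ hc₂ _ hx₂]

lemma con_incl (hE : E₁ ⊆ E₂) (hc₁ : G.IsCompleteSub V₁ E₁)
    (hc₂ : G.IsCompleteSub V₂ E₂)
    {α β : (G.subRF V₁ E₁ h₁).F} (h : (G.subRF V₁ E₁ h₁).graphCon α β) :
    (G.subRF V₂ E₂ h₂).graphCon (G.incl h₁ h₂ hV α) (G.incl h₁ h₂ hV β) :=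
  con_of_step_map _ (fun _ _ hs => G.step_incl h₁ h₂ hV hE hc₁ hc₂ hs) h

/-- The induced hom between subgraph monoids. -/
noncomputable def inclHom (hE : E₁ ⊆ E₂) (hc₁ : G.IsCompleteSub V₁ E₁)
    (hc₂ : G.IsCompleteSub V₂ E₂) :
    (G.subRF V₁ E₁ h₁).M →+ (G.subRF V₂ E₂ h₂).M :=
  AddCon.lift _ ((G.subRF V₂ E₂ h₂).graphCon.mk'.comp (G.incl h₁ h₂ hV)) fun a b h =>
    (AddCon.eq _).mpr (G.con_incl h₁ h₂ hV hE hc₁ hc₂ h)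

lemma inclHom_mk' (hE : E₁ ⊆ E₂) (hc₁ : G.IsCompleteSub V₁ E₁)
    (hc₂ : G.IsCompleteSub V₂ E₂) (α : (G.subRF V₁ E₁ h₁).F) :
    G.inclHom h₁ h₂ hV hE hc₁ hc₂ ((G.subRF V₁ E₁ h₁).graphCon.mk' α) =
      (G.subRF V₂ E₂ h₂).graphCon.mk' (G.incl h₁ h₂ hV α) :=
  AddCon.lift_mk' _ _

end Incl

/-- Any finite pair of vertex/edge sets is contained in a finite complete subgraph. -/
lemma completion (W : Set G.V) (Fe : Set G.Edge) (hW : W.Finite) (hF : Fe.Finite) :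
    ∃ (W₂ : Set G.V) (F₂ : Set G.Edge) (h₂ : G.IsSubgraph W₂ F₂),
      G.IsCompleteSub W₂ F₂ ∧ W₂.Finite ∧ F₂.Finite ∧ W ⊆ W₂ ∧ Fe ⊆ F₂ := by
  set F₂ : Set G.Edge := {e | ∃ f ∈ Fe, G.s e = G.s f} with hF₂
  have hF₂fin : F₂.Finite := by
    have : F₂ = ⋃ f ∈ Fe, {e | G.s e = G.s f} := by
      ext e; simp [hF₂, Set.mem_iUnion]
    rw [this]
    exact Set.Finite.biUnion hF fun f _ => G.rowFinite (G.s f)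
  refine ⟨W ∪ G.s '' F₂ ∪ G.r '' F₂, F₂, ?_, ?_, ?_, hF₂fin, ?_, ?_⟩
  · intro e he
    exact ⟨Or.inl (Or.inr ⟨e, he, rfl⟩), Or.inr ⟨e, he, rfl⟩⟩
  · rintro v _ ⟨e, he, hse⟩ f hsf
    obtain ⟨e0, he0, hee0⟩ := he
    exact ⟨e0, he0, by rw [hsf, ← hse, hee0]⟩
  · exact (hW.union (hF₂fin.image G.s)).union (hF₂fin.image G.r)
  · exact fun v hv => Or.inl (Or.inl hv)
  · exact fun e he => ⟨e, he, rfl⟩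

/-- KEY: every instance of the congruence on `F_G` is witnessed inside a
finite complete subgraph. -/
lemma key {α β : G.F} (h : G.graphCon α β) :
    ∃ (W : Set G.V) (Fe : Set G.Edge) (hs : G.IsSubgraph W Fe),
      G.IsCompleteSub W Fe ∧ W.Finite ∧ Fe.Finite ∧
      ∃ α' β' : (G.subRF W Fe hs).F, G.iota hs α' = α ∧ G.iota hs β' = β ∧
        (G.subRF W Fe hs).graphCon α' β' := by
  have h' : AddConGen.Rel G.step α β := h
  clear h
  induction h' with
  | of p q hpq =>
    obtain ⟨v, α', hv, rfl, rfl⟩ := hpq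
    set W : Set G.V := {v} ∪ ↑α'.support ∪ G.r '' {e | G.s e = v} with hW
    set Fe : Set G.Edge := {e | G.s e = v} with hFe
    have hs : G.IsSubgraph W Fe := by
      intro e he
      exact ⟨Or.inl (Or.inl he), Or.inr ⟨e, he, rfl⟩⟩
    have hc : G.IsCompleteSub W Fe := by
      rintro u hu ⟨e, he, hse⟩ f hsf
      show G.s f = v
      rw [hsf, ← hse]
      exact he
    have hvW : v ∈ W := Or.inl (Or.inl rfl)
    have hsupp : ↑α'.support ⊆ W := fun a ha => Or.inl (Or.inr ha)
    obtain ⟨e0, hse0⟩ := hv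
    have hem : (G.subRF W Fe hs).emits ⟨v, hvW⟩ :=
      (G.sub_emits_iff hs _).mpr ⟨e0, hse0, hse0⟩
    refine ⟨W, Fe, hs, hc,
      ((Set.finite_singleton v).union α'.support.finite_toSet).union
        ((G.rowFinite v).image G.r), G.rowFinite v,
      Finsupp.single ⟨v, hvW⟩ 1 + (α'.subtypeDomain (· ∈ W) : (G.subRF W Fe hs).F),
      (G.subRF W Fe hs).rr ⟨v, hvW⟩ + (α'.subtypeDomain (· ∈ W) : (G.subRF W Fe hs).F),
      ?_, ?_, ?_⟩
    · rw [map_add, iota_single, G.iota_subtypeDomain hs α' hsupp]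
    · rw [map_add, G.iota_rr hs hc _ hem, G.iota_subtypeDomain hs α' hsupp]
    · exact AddConGen.Rel.of _ _
        ⟨⟨v, hvW⟩, (α'.subtypeDomain (· ∈ W) : (G.subRF W Fe hs).F), hem, rfl, rfl⟩
  | refl p =>
    have hs : G.IsSubgraph ↑p.support ∅ := fun e he => absurd he (Set.notMem_empty e)
    have hc : G.IsCompleteSub ↑p.support ∅ := by
      rintro u hu ⟨e, he, -⟩
      exact absurd he (Set.notMem_empty e)
    refine ⟨↑p.support, ∅, hs, hc, p.support.finite_toSet, Set.finite_empty,
      p.subtypeDomain _, p.subtypeDomain _, ?_, ?_, ?_⟩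
    · exact G.iota_subtypeDomain hs p fun a ha => ha
    · exact G.iota_subtypeDomain hs p fun a ha => ha
    · exact (G.subRF _ _ hs).graphCon.refl _
  | symm h0 ih =>
    obtain ⟨W, Fe, hs, hc, fW, fF, a, b, ha, hb, hrel⟩ := ih
    exact ⟨W, Fe, hs, hc, fW, fF, b, a, hb, ha, (G.subRF W Fe hs).graphCon.symm hrel⟩
  | trans h1 h2 ih1 ih2 =>
    obtain ⟨W₁, F₁, hs₁, hc₁, fW₁, fF₁, a₁, b₁, ha₁, hb₁, hrel₁⟩ := ih1
    obtain ⟨W₂, F₂, hs₂, hc₂, fW₂, fF₂, b₂, c₂, hb₂, hc₂', hrel₂⟩ := ih2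
    obtain ⟨W, Fe, hs, hc, fW, fF, hWs, hFs⟩ :=
      G.completion (W₁ ∪ W₂) (F₁ ∪ F₂) (fW₁.union fW₂) (fF₁.union fF₂)
    have hV₁ : W₁ ⊆ W := Set.subset_union_left.trans hWs
    have hV₂ : W₂ ⊆ W := Set.subset_union_right.trans hWs
    have hE₁ : F₁ ⊆ Fe := Set.subset_union_left.trans hFs
    have hE₂ : F₂ ⊆ Fe := Set.subset_union_right.trans hFs
    have hB : G.incl hs₁ hs hV₁ b₁ = G.incl hs₂ hs hV₂ b₂ := by
      apply G.iota_inj hs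
      rw [iota_incl, iota_incl, hb₁, hb₂]
    refine ⟨W, Fe, hs, hc, fW, fF, G.incl hs₁ hs hV₁ a₁, G.incl hs₂ hs hV₂ c₂,
      ?_, ?_, ?_⟩
    · rw [iota_incl, ha₁]
    · rw [iota_incl, hc₂']
    · exact ((G.subRF W Fe hs).graphCon.trans
        (G.con_incl hs₁ hs hV₁ hE₁ hc₁ hc hrel₁))
        (hB ▸ G.con_incl hs₂ hs hV₂ hE₂ hc₂ hc hrel₂)
  | add h1 h2 ih1 ih2 =>
    obtain ⟨W₁, F₁, hs₁, hc₁, fW₁, fF₁, a₁, b₁, ha₁, hb₁, hrel₁⟩ := ih1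
    obtain ⟨W₂, F₂, hs₂, hc₂, fW₂, fF₂, a₂, b₂, ha₂, hb₂, hrel₂⟩ := ih2
    obtain ⟨W, Fe, hs, hc, fW, fF, hWs, hFs⟩ :=
      G.completion (W₁ ∪ W₂) (F₁ ∪ F₂) (fW₁.union fW₂) (fF₁.union fF₂)
    have hV₁ : W₁ ⊆ W := Set.subset_union_left.trans hWs
    have hV₂ : W₂ ⊆ W := Set.subset_union_right.trans hWs
    have hE₁ : F₁ ⊆ Fe := Set.subset_union_left.trans hFs
    have hE₂ : F₂ ⊆ Fe := Set.subset_union_right.trans hFs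
    refine ⟨W, Fe, hs, hc, fW, fF,
      G.incl hs₁ hs hV₁ a₁ + G.incl hs₂ hs hV₂ a₂,
      G.incl hs₁ hs hV₁ b₁ + G.incl hs₂ hs hV₂ b₂, ?_, ?_, ?_⟩
    · rw [map_add, iota_incl, iota_incl, ha₁, ha₂]
    · rw [map_add, iota_incl, iota_incl, hb₁, hb₂]
    · exact (G.subRF W Fe hs).graphCon.add
        (G.con_incl hs₁ hs hV₁ hE₁ hc₁ hc hrel₁)
        (G.con_incl hs₂ hs hV₂ hE₂ hc₂ hc hrel₂)

end RFGraph

/-- For a finite complete subgraph `X` of a row-finite graph `E`,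
`a_v ↦ a_v` induces a monoid homomorphism `M_X → M_E`; (i) every element of
`M_E` is in the image of such a map for some finite complete subgraph; (ii) two
elements of `M_X` with equal images in `M_E` already have equal images in `M_Y`
for some finite complete subgraph `Y ⊇ X`. -/
theorem stmt15 (G : RFGraph) (V' : Set G.V) (E' : Set G.Edge)
    (hsub : G.IsSubgraph V' E') (hcomp : G.IsCompleteSub V' E')
    (hVf : V'.Finite) (hEf : E'.Finite) :
    (∃ φ : (G.subRF V' E' hsub).M →+ G.M,
        ∀ v : ↥V', φ ((G.subRF V' E' hsub).av v) = G.av v.1) ∧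
    (∀ x : G.M, ∃ (W' : Set G.V) (F' : Set G.Edge) (h : G.IsSubgraph W' F'),
        G.IsCompleteSub W' F' ∧ W'.Finite ∧ F'.Finite ∧
        ∃ φ : (G.subRF W' F' h).M →+ G.M,
          (∀ v : ↥W', φ ((G.subRF W' F' h).av v) = G.av v.1) ∧ x ∈ Set.range φ) ∧
    (∀ φ : (G.subRF V' E' hsub).M →+ G.M,
        (∀ v : ↥V', φ ((G.subRF V' E' hsub).av v) = G.av v.1) →
        ∀ m₁ m₂ : (G.subRF V' E' hsub).M, φ m₁ = φ m₂ →
        ∃ (W' : Set G.V) (F' : Set G.Edge) (h : G.IsSubgraph W' F'),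
          G.IsCompleteSub W' F' ∧ W'.Finite ∧ F'.Finite ∧ V' ⊆ W' ∧ E' ⊆ F' ∧
          ∃ ψ : (G.subRF V' E' hsub).M →+ (G.subRF W' F' h).M,
            (∀ (v : ↥V') (hv : v.1 ∈ W'),
              ψ ((G.subRF V' E' hsub).av v) = (G.subRF W' F' h).av ⟨v.1, hv⟩) ∧
            ψ m₁ = ψ m₂) := by
  refine ⟨⟨G.toBig hsub hcomp, G.toBig_av hsub hcomp⟩, ?_, ?_⟩
  · -- (i): every element of `M_E` is in the image of some finite complete subgraph
    intro x
    obtain ⟨a, rfl⟩ := AddCon.mk'_surjective x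
    have hs0 : G.IsSubgraph ↑a.support ∅ := fun e he => absurd he (Set.notMem_empty e)
    have hc0 : G.IsCompleteSub ↑a.support ∅ := by
      rintro v hv ⟨e, he, -⟩
      exact absurd he (Set.notMem_empty e)
    refine ⟨↑a.support, ∅, hs0, hc0, a.support.finite_toSet, Set.finite_empty,
      G.toBig hs0 hc0, G.toBig_av hs0 hc0,
      (G.subRF _ _ hs0).graphCon.mk' (a.subtypeDomain (· ∈ (↑a.support : Set G.V))), ?_⟩
    rw [RFGraph.toBig_mk', G.iota_subtypeDomain hs0 a fun u hu => hu]
  · -- (ii): equal images are already equal in a larger finite complete subgraph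
    intro φ hφ m₁ m₂ hm
    have hφeq : φ = G.toBig hsub hcomp :=
      G.hom_ext hsub _ _ fun v => by rw [hφ v, G.toBig_av hsub hcomp v]
    obtain ⟨a₁, rfl⟩ := AddCon.mk'_surjective m₁
    obtain ⟨a₂, rfl⟩ := AddCon.mk'_surjective m₂
    rw [hφeq, RFGraph.toBig_mk', RFGraph.toBig_mk'] at hm
    have hcon : G.graphCon (G.iota hsub a₁) (G.iota hsub a₂) := (AddCon.eq _).mp hm
    obtain ⟨W₀, F₀, hs₀, hc₀, fW₀, fF₀, b₁, b₂, hb₁, hb₂, hrel⟩ := G.key hcon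
    obtain ⟨W, Fe, hs, hc, fW, fF, hWs, hFs⟩ :=
      G.completion (W₀ ∪ V') (F₀ ∪ E') (fW₀.union hVf) (fF₀.union hEf)
    have hV0 : W₀ ⊆ W := Set.subset_union_left.trans hWs
    have hE0 : F₀ ⊆ Fe := Set.subset_union_left.trans hFs
    have hV' : V' ⊆ W := Set.subset_union_right.trans hWs
    have hE' : E' ⊆ Fe := Set.subset_union_right.trans hFs
    refine ⟨W, Fe, hs, hc, fW, fF, hV', hE',
      G.inclHom hsub hs hV' hE' hcomp hc, ?_, ?_⟩
    · intro v hv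
      rw [RFGraph.av_def, RFGraph.av_def, RFGraph.inclHom_mk']
      congr 1
      rw [RFGraph.incl_apply, Finsupp.mapDomain_single]
    · rw [RFGraph.inclHom_mk', RFGraph.inclHom_mk']
      have e₁ : G.incl hsub hs hV' a₁ = G.incl hs₀ hs hV0 b₁ := by
        apply G.iota_inj hs
        rw [RFGraph.iota_incl, RFGraph.iota_incl, hb₁]
      have e₂ : G.incl hsub hs hV' a₂ = G.incl hs₀ hs hV0 b₂ := by
        apply G.iota_inj hs
        rw [RFGraph.iota_incl, RFGraph.iota_incl, hb₂]
      rw [e₁, e₂]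
      exact (AddCon.eq _).mpr (G.con_incl hs₀ hs hV0 hE0 hc₀ hc hrel)
end
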